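/- Let d be a homogeneous derivation of degree 0 from tsns to tsns⊗tsns. Then x∗d(L_0) = 0 for all x ∈ tsns, and consequently d(L_0) ∈ ℂM_0⊗M_0. -/

import Mathlib

open Finsupp

/-- Basis indices of the twisted `N = 1` Schrödinger–Neveu–Schwarz algebra.
`L n` is `L_n` (`n ∈ ℤ`), `G k` is `G_{k+1/2}` (`k ∈ ℤ`),
`Y k` is `Y_{k/2}` and `M k` is `M_{k/2}` (`k ∈ ℤ`, so `k/2` ranges over `(1/2)ℤ`). -/
inductive TIdx : Type
  | L : ℤ → TIdx
  | G : ℤ → TIdx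
  | Y : ℤ → TIdx
  | M : ℤ → TIdx
  deriving DecidableEq

noncomputable section

/-- The underlying vector space of `tsns`: the free `ℂ`-vector space on the basis. -/
abbrev Tsns : Type := TIdx →₀ ℂ

/-- The basis vectors. -/
def bs (i : TIdx) : Tsns := Finsupp.single i 1

/-- The `ℤ₂`-parity of a basis vector. -/
def parity : TIdx → ZMod 2
  | .L _ => 0
  | .G _ => 1
  | .Y k => (k : ZMod 2)
  | .M k => (k : ZMod 2)

/-- The sign `(-1)^{ab}` for parities `a, b`. -/
def sg (a b : ZMod 2) : ℂ := if a = 1 ∧ b = 1 then -1 else 1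

/-- The super-bracket of `tsns` on basis vectors. -/
def brIdx : TIdx → TIdx → Tsns
  | .L n, .L m => ((m : ℂ) - n) • bs (.L (n + m))
  | .L n, .G k => ((k : ℂ) + 1/2 - n/2) • bs (.G (k + n))
  | .G k, .L n => (-((k : ℂ) + 1/2 - n/2)) • bs (.G (k + n))
  | .L n, .Y k => (if (k : ZMod 2) = 0 then ((k : ℂ) - n)/2 else (k : ℂ)/2) • bs (.Y (k + 2*n))
  | .Y k, .L n => (-(if (k : ZMod 2) = 0 then ((k : ℂ) - n)/2 else (k : ℂ)/2)) • bs (.Y (k + 2*n))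
  | .L n, .M k => (if (k : ZMod 2) = 0 then (k : ℂ)/2 else ((k : ℂ) + n)/2) • bs (.M (k + 2*n))
  | .M k, .L n => (-(if (k : ZMod 2) = 0 then (k : ℂ)/2 else ((k : ℂ) + n)/2)) • bs (.M (k + 2*n))
  | .G k, .G l => (2 : ℂ) • bs (.L (k + l + 1))
  | .G l, .Y k => (if (k : ZMod 2) = 0 then ((k : ℂ) - 2*l - 1)/4 else 2) • bs (.Y (k + 2*l + 1))
  | .Y k, .G l => (if (k : ZMod 2) = 0 then -(((k : ℂ) - 2*l - 1)/4) else 2) • bs (.Y (k + 2*l + 1))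
  | .G l, .M k => (if (k : ZMod 2) = 0 then (k : ℂ)/4 else 2) • bs (.M (k + 2*l + 1))
  | .M k, .G l => (if (k : ZMod 2) = 0 then -((k : ℂ)/4) else 2) • bs (.M (k + 2*l + 1))
  | .Y k, .Y l =>
      (if (k : ZMod 2) = 0 then (if (l : ZMod 2) = 0 then ((l : ℂ) - k)/4 else (l : ℂ)/4)
       else (if (l : ZMod 2) = 0 then -((k : ℂ)/4) else 2)) • bs (.M (k + l))
  | _, _ => 0

/-- The super-bracket of `tsns`, as a bilinear map. -/
def brk : Tsns →ₗ[ℂ] Tsns →ₗ[ℂ] Tsns :=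
  Finsupp.lsum ℂ fun i => LinearMap.toSpanSingleton ℂ _
    (Finsupp.lsum ℂ fun j => LinearMap.toSpanSingleton ℂ Tsns (brIdx i j))

/-- `x` is homogeneous of parity `σ`. -/
def IsHom (σ : ZMod 2) (x : Tsns) : Prop := ∀ i ∈ x.support, parity i = σ

/-- The tensor square `tsns ⊗ tsns`, modelled as the free vector space on pairs
of basis indices. -/
abbrev T2 : Type := (TIdx × TIdx) →₀ ℂ

/-- The tensor cube `tsns ⊗ tsns ⊗ tsns`. -/
abbrev T3 : Type := (TIdx × TIdx × TIdx) →₀ ℂ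

/-- The tensor product map `tsns × tsns → tsns ⊗ tsns`. -/
def tp : Tsns →ₗ[ℂ] Tsns →ₗ[ℂ] T2 :=
  Finsupp.lsum ℂ fun i => LinearMap.toSpanSingleton ℂ _
    (Finsupp.lsum ℂ fun j => LinearMap.toSpanSingleton ℂ T2 (Finsupp.single (i, j) 1))

/-- The tensor product map `tsns × tsns × tsns → tsns ⊗ tsns ⊗ tsns`. -/
def t3 : Tsns →ₗ[ℂ] Tsns →ₗ[ℂ] Tsns →ₗ[ℂ] T3 :=
  Finsupp.lsum ℂ fun i => LinearMap.toSpanSingleton ℂ _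
    (Finsupp.lsum ℂ fun j => LinearMap.toSpanSingleton ℂ _
      (Finsupp.lsum ℂ fun k => LinearMap.toSpanSingleton ℂ T3 (Finsupp.single (i, j, k) 1)))

/-- The adjoint diagonal action of `tsns` on `tsns ⊗ tsns`:
`x ∗ (a ⊗ b) = [x,a] ⊗ b + (-1)^{[x][a]} a ⊗ [x,b]`. -/
def star2 : Tsns →ₗ[ℂ] T2 →ₗ[ℂ] T2 :=
  Finsupp.lsum ℂ fun i => LinearMap.toSpanSingleton ℂ _
    (Finsupp.lsum ℂ fun p => LinearMap.toSpanSingleton ℂ T2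
      (tp (brIdx i p.1) (bs p.2) + sg (parity i) (parity p.1) • tp (bs p.1) (brIdx i p.2)))

/-- The adjoint diagonal action of `tsns` on `tsns ⊗ tsns ⊗ tsns`. -/
def star3 : Tsns →ₗ[ℂ] T3 →ₗ[ℂ] T3 :=
  Finsupp.lsum ℂ fun i => LinearMap.toSpanSingleton ℂ _
    (Finsupp.lsum ℂ fun t => LinearMap.toSpanSingleton ℂ T3
      (t3 (brIdx i t.1) (bs t.2.1) (bs t.2.2)
        + sg (parity i) (parity t.1) • t3 (bs t.1) (brIdx i t.2.1) (bs t.2.2)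
        + (sg (parity i) (parity t.1) * sg (parity i) (parity t.2.1)) •
            t3 (bs t.1) (bs t.2.1) (brIdx i t.2.2)))

/-- The super-twist map `τ(x ⊗ y) = (-1)^{[x][y]} y ⊗ x`. -/
def tau : T2 →ₗ[ℂ] T2 :=
  Finsupp.lsum ℂ fun p => LinearMap.toSpanSingleton ℂ T2
    (sg (parity p.1) (parity p.2) • Finsupp.single (p.2, p.1) 1)

/-- The super-cyclic map `ξ(x₁ ⊗ x₂ ⊗ x₃) = (-1)^{[x₁]([x₂]+[x₃])} x₂ ⊗ x₃ ⊗ x₁`. -/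
def xi : T3 →ₗ[ℂ] T3 :=
  Finsupp.lsum ℂ fun t => LinearMap.toSpanSingleton ℂ T3
    (sg (parity t.1) (parity t.2.1 + parity t.2.2) • Finsupp.single (t.2.1, t.2.2, t.1) 1)

/-- `Im(1⊗1 - τ) ⊆ tsns ⊗ tsns`. -/
def ImSkew : Submodule ℂ T2 := LinearMap.range (LinearMap.id - tau)

/-- `ℂ M₀ ⊗ M₀`, the tensor square of the center. -/
def CC : Submodule ℂ T2 := Submodule.span ℂ {Finsupp.single (TIdx.M 0, TIdx.M 0) 1}

/-- The `(1/2)ℤ`-degree of a basis vector, recorded in half-units (i.e. twice the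
degree, an integer). -/
def hdeg : TIdx → ℤ
  | .L n => 2*n
  | .G k => 2*k + 1
  | .Y k => k
  | .M k => k

/-- The degree (in half-units) of a basis vector of the tensor square. -/
def hdeg2 (p : TIdx × TIdx) : ℤ := hdeg p.1 + hdeg p.2

/-- `d : tsns → tsns ⊗ tsns` is a homogeneous derivation of `ℤ₂`-parity `π`:
`d [x,y] = (-1)^{[d][x]} x ∗ d y - (-1)^{[y]([d]+[x])} y ∗ d x`
(stated on homogeneous basis vectors). -/
def IsDerP (π : ZMod 2) (d : Tsns →ₗ[ℂ] T2) : Prop :=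
  ∀ i j : TIdx, d (brk (bs i) (bs j)) =
    sg π (parity i) • star2 (bs i) (d (bs j))
      - sg (parity j) (π + parity i) • star2 (bs j) (d (bs i))

/-- An even derivation `tsns → tsns ⊗ tsns`. -/
def IsDer2 (d : Tsns →ₗ[ℂ] T2) : Prop := IsDerP 0 d

/-- The special derivations `d^♮` on basis vectors (parameters `α, α†, β, β†`). -/
def dnatB (a a' b b' : ℂ) : TIdx → T2
  | .L n => (a * n) • Finsupp.single (.M 0, .M (2*n)) 1
      + (a' * n) • Finsupp.single (.M (2*n), .M 0) 1
  | .G k => (a * ((k : ℂ) + 1/2)) • Finsupp.single (.M 0, .M (2*k+1)) 1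
      + (a' * ((k : ℂ) + 1/2)) • Finsupp.single (.M (2*k+1), .M 0) 1
  | .Y k => b • Finsupp.single (.M 0, .Y k) 1 + b' • Finsupp.single (.Y k, .M 0) 1
  | .M k => (2*b) • Finsupp.single (.M 0, .M k) 1 + (2*b') • Finsupp.single (.M k, .M 0) 1

/-- The special derivations `d^♮ : tsns → tsns ⊗ tsns`. -/
def dnat (a a' b b' : ℂ) : Tsns →ₗ[ℂ] T2 :=
  Finsupp.lsum ℂ fun i => LinearMap.toSpanSingleton ℂ T2 (dnatB a a' b b' i)

/-- Multiplication by `(-1)^{σ·[u]}` on `tsns ⊗ tsns`. -/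
def twT2 (σ : ZMod 2) : T2 →ₗ[ℂ] T2 :=
  Finsupp.lsum ℂ fun p => LinearMap.toSpanSingleton ℂ T2
    (sg σ (parity p.1 + parity p.2) • Finsupp.single p 1)

/-- The coboundary `Δ_r (x) = (-1)^{[r][x]} x ∗ r`. -/
def Δr (r : T2) : Tsns →ₗ[ℂ] T2 :=
  Finsupp.lsum ℂ fun i => LinearMap.toSpanSingleton ℂ T2 (star2 (bs i) (twT2 (parity i) r))

/-- The embedding `tsns ⊗ (tsns ⊗ tsns) → tsns ⊗ tsns ⊗ tsns`. -/
def t13 : Tsns →ₗ[ℂ] T2 →ₗ[ℂ] T3 :=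
  Finsupp.lsum ℂ fun i => LinearMap.toSpanSingleton ℂ _
    (Finsupp.lsum ℂ fun q => LinearMap.toSpanSingleton ℂ T3 (Finsupp.single (i, q.1, q.2) 1))

/-- `1 ⊗ D : tsns ⊗ tsns → tsns ⊗ tsns ⊗ tsns` for an (even) linear map `D`. -/
def oneTensor (D : Tsns →ₗ[ℂ] T2) : T2 →ₗ[ℂ] T3 :=
  Finsupp.lsum ℂ fun p => LinearMap.toSpanSingleton ℂ T3 (t13 (bs p.1) (D (bs p.2)))

/-- The summand of `c(r)` coming from a pair of basis tensors
`p = a_i ⊗ b_i`, `q = a_j ⊗ b_j`. -/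
def cB (p q : TIdx × TIdx) : T3 :=
  sg (parity q.1) (parity p.2) • t3 (brIdx p.1 q.1) (bs p.2) (bs q.2)
    + t3 (bs p.1) (brIdx p.2 q.1) (bs q.2)
    + sg (parity q.1) (parity p.2) • t3 (bs p.1) (bs q.1) (brIdx p.2 q.2)

/-- `c` as a bilinear map. -/
def cY : T2 →ₗ[ℂ] T2 →ₗ[ℂ] T3 :=
  Finsupp.lsum ℂ fun p => LinearMap.toSpanSingleton ℂ _
    (Finsupp.lsum ℂ fun q => LinearMap.toSpanSingleton ℂ T3 (cB p q))

/-- `c(r) = [r¹²,r¹³] + [r¹²,r²³] + [r¹³,r²³]`. -/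
def cr (r : T2) : T3 := cY r r

/-- `(tsns, [·,·], D)` is a Lie superbialgebra: `Im D ⊆ Im(1⊗1−τ)`, the super
co-Jacobi identity holds, and `D` is a 1-cocycle. -/
def IsSuperBialg (D : Tsns →ₗ[ℂ] T2) : Prop :=
  (∀ x : Tsns, D x ∈ ImSkew) ∧
  (∀ x : Tsns,
    oneTensor D (D x) + xi (oneTensor D (D x)) + xi (xi (oneTensor D (D x))) = 0) ∧
  (∀ i j : TIdx, D (brk (bs i) (bs j)) =
    star2 (bs i) (D (bs j)) - sg (parity i) (parity j) • star2 (bs j) (D (bs i)))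

end


section Aux

open TIdx Finsupp

/-- Shift of indices under `ad L_n`. -/
def shiftn (n : ℤ) : TIdx → TIdx
  | .L m => .L (n + m)
  | .G k => .G (k + n)
  | .Y k => .Y (k + 2*n)
  | .M k => .M (k + 2*n)

/-- Coefficient of `ad L_n`. -/
noncomputable def cL (n : ℤ) : TIdx → ℂ
  | .L m => (m : ℂ) - n
  | .G k => (k : ℂ) + 1/2 - n/2
  | .Y k => if (k : ZMod 2) = 0 then ((k : ℂ) - n)/2 else (k : ℂ)/2
  | .M k => if (k : ZMod 2) = 0 then (k : ℂ)/2 else ((k : ℂ) + n)/2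

lemma brIdx_L (n : ℤ) (i : TIdx) : brIdx (.L n) i = cL n i • bs (shiftn n i) := by
  cases i <;> rfl

lemma parity_L (n : ℤ) : parity (.L n) = 0 := rfl

lemma sg_zero_left (b : ZMod 2) : sg 0 b = 1 := by
  rw [sg, if_neg]; rintro ⟨h, -⟩; exact absurd h (by decide)

lemma sg_zero_right (a : ZMod 2) : sg a 0 = 1 := by
  rw [sg, if_neg]; rintro ⟨-, h⟩; exact absurd h (by decide)

lemma shiftn_zero (i : TIdx) : shiftn 0 i = i := by
  cases i <;> simp [shiftn]

lemma shiftn_inj {n : ℤ} {a b : TIdx} (h : shiftn n a = shiftn n b) : a = b := by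
  cases a <;> cases b <;> simp_all [shiftn] <;> omega

lemma shiftn_n_inj {i : TIdx} {n m : ℤ} (h : shiftn n i = shiftn m i) : n = m := by
  cases i <;> simp_all [shiftn] <;> omega

lemma tp_bs (a b : TIdx) : tp (bs a) (bs b) = Finsupp.single (a, b) 1 := by
  simp [tp, bs]

lemma brk_bs (i j : TIdx) : brk (bs i) (bs j) = brIdx i j := by
  simp [brk, bs]

lemma star2_bs_apply (i : TIdx) (r : T2) :
    star2 (bs i) r = r.sum fun p c => c • (tp (brIdx i p.1) (bs p.2)
      + sg (parity i) (parity p.1) • tp (bs p.1) (brIdx i p.2)) := by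
  rw [star2, bs, Finsupp.lsum_single, LinearMap.toSpanSingleton_apply, one_smul,
    Finsupp.lsum_apply]
  exact Finsupp.sum_congr fun p _ => rfl

lemma star2_L (n : ℤ) (r : T2) :
    star2 (bs (.L n)) r =
      r.sum fun p c => c • (cL n p.1 • Finsupp.single (shiftn n p.1, p.2) (1:ℂ)
        + cL n p.2 • Finsupp.single (p.1, shiftn n p.2) (1:ℂ)) := by
  rw [star2_bs_apply]
  refine Finsupp.sum_congr fun p _ => ?_
  rw [parity_L, sg_zero_left, one_smul, brIdx_L, brIdx_L, map_smul,
    LinearMap.smul_apply, map_smul, tp_bs, tp_bs]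

lemma star2_L_apply (n : ℤ) (r : T2) (q : TIdx × TIdx) :
    (star2 (bs (.L n)) r) q =
      r.sum fun p c => c * (cL n p.1 * (if (shiftn n p.1, p.2) = q then 1 else 0)
        + cL n p.2 * (if (p.1, shiftn n p.2) = q then 1 else 0)) := by
  rw [star2_L, Finsupp.sum_apply]
  refine Finsupp.sum_congr fun p _ => ?_
  simp only [Finsupp.smul_apply, Finsupp.add_apply, Finsupp.single_apply, smul_eq_mul]

lemma exists_B (i : TIdx) (hi : i ≠ .M 0) :
    ∃ B : Set ℤ, B.Finite ∧ ∀ n ∉ B, cL n i ≠ 0 := by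
  cases i with
  | L m =>
      refine ⟨{m}, Set.finite_singleton _, fun n hn h => hn ?_⟩
      simp only [cL] at h
      have : (m : ℂ) = n := by linear_combination h
      exact_mod_cast this.symm
  | G k =>
      refine ⟨{2*k+1}, Set.finite_singleton _, fun n hn h => hn ?_⟩
      simp only [cL] at h
      have : (n : ℂ) = 2*k+1 := by linear_combination -2*h
      exact_mod_cast this
  | Y k =>
      by_cases hk : (k : ZMod 2) = 0
      · refine ⟨{k}, Set.finite_singleton _, fun n hn h => hn ?_⟩
        simp only [cL] at h; rw [if_pos hk] at h
        have : (n : ℂ) = k := by linear_combination -2*h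
        exact_mod_cast this
      · refine ⟨∅, Set.finite_empty, fun n _ h => hk ?_⟩
        simp only [cL] at h; rw [if_neg hk] at h
        have hk0 : (k : ℂ) = 0 := by linear_combination 2*h
        have : k = 0 := by exact_mod_cast hk0
        rw [this]; rfl
  | M k =>
      by_cases hk : (k : ZMod 2) = 0
      · refine ⟨∅, Set.finite_empty, fun n _ h => hi ?_⟩
        simp only [cL] at h; rw [if_pos hk] at h
        have hk0 : (k : ℂ) = 0 := by linear_combination 2*h
        have : k = 0 := by exact_mod_cast hk0
        rw [this]
      · refine ⟨{-k}, Set.finite_singleton _, fun n hn h => hn ?_⟩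
        simp only [cL] at h; rw [if_neg hk] at h
        have : (n : ℂ) = -k := by linear_combination 2*h
        have : n = -k := by exact_mod_cast this
        simp [this]

lemma exists_good (S : Finset (TIdx × TIdx)) (i : TIdx) (hi : i ≠ .M 0)
    (sel : TIdx × TIdx → TIdx) :
    ∃ n : ℤ, cL n i ≠ 0 ∧ ∀ p ∈ S, sel p ≠ shiftn n i := by
  obtain ⟨B, hBfin, hB⟩ := exists_B i hi
  have hbad : (B ∪ ⋃ p ∈ (S : Set (TIdx × TIdx)), {n : ℤ | shiftn n i = sel p}).Finite := by
    refine hBfin.union (Set.Finite.biUnion S.finite_toSet fun p _ => ?_)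
    refine Set.Subsingleton.finite fun n₁ h₁ n₂ h₂ => ?_
    exact shiftn_n_inj (h₁.trans h₂.symm)
  obtain ⟨n, hn⟩ := hbad.infinite_compl.nonempty
  rw [Set.mem_compl_iff, Set.mem_union, not_or] at hn
  refine ⟨n, hB n hn.1, fun p hp he => ?_⟩
  exact hn.2 (Set.mem_biUnion hp (he.symm : shiftn n i = sel p))

lemma kill1 (r : T2) (h : ∀ n : ℤ, star2 (bs (.L n)) r = 0) :
    ∀ p ∈ r.support, p.1 = TIdx.M 0 := by
  intro p hp
  by_contra hi
  obtain ⟨n, hc, hgood⟩ := exists_good r.support p.1 hi Prod.fst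
  have h0 : (star2 (bs (.L n)) r) (shiftn n p.1, p.2) = 0 := by rw [h n]; rfl
  rw [star2_L_apply, Finsupp.sum] at h0
  rw [Finset.sum_eq_single p ?h1 ?h2] at h0
  case h1 =>
    intro p' hp' hne
    have e1 : (shiftn n p'.1, p'.2) ≠ (shiftn n p.1, p.2) := by
      simp only [ne_eq, Prod.mk.injEq, not_and]
      intro he1 he2
      exact hne (Prod.ext (shiftn_inj he1) he2)
    have e2 : (p'.1, shiftn n p'.2) ≠ (shiftn n p.1, p.2) := by
      simp only [ne_eq, Prod.mk.injEq, not_and]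
      intro he1 _
      exact hgood p' hp' he1
    rw [if_neg e1, if_neg e2]; ring
  case h2 => intro hnot; exact absurd hp hnot
  have e2 : (p.1, shiftn n p.2) ≠ (shiftn n p.1, p.2) := by
    simp only [ne_eq, Prod.mk.injEq, not_and]
    intro he1 _
    exact hgood p hp he1
  rw [if_pos rfl, if_neg e2, mul_zero, add_zero, mul_one] at h0
  rcases mul_eq_zero.mp h0 with h' | h'
  · exact absurd h' (Finsupp.mem_support_iff.mp hp)
  · exact hc h'

lemma kill2 (r : T2) (h : ∀ n : ℤ, star2 (bs (.L n)) r = 0) :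
    ∀ p ∈ r.support, p.2 = TIdx.M 0 := by
  intro p hp
  by_contra hi
  obtain ⟨n, hc, hgood⟩ := exists_good r.support p.2 hi Prod.snd
  have h0 : (star2 (bs (.L n)) r) (p.1, shiftn n p.2) = 0 := by rw [h n]; rfl
  rw [star2_L_apply, Finsupp.sum] at h0
  rw [Finset.sum_eq_single p ?h1 ?h2] at h0
  case h1 =>
    intro p' hp' hne
    have e1 : (shiftn n p'.1, p'.2) ≠ (p.1, shiftn n p.2) := by
      simp only [ne_eq, Prod.mk.injEq, not_and]
      intro he1 he2
      exact hgood p' hp' (he2 ▸ rfl)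
    have e2 : (p'.1, shiftn n p'.2) ≠ (p.1, shiftn n p.2) := by
      simp only [ne_eq, Prod.mk.injEq, not_and]
      intro he1 he2
      exact hne (Prod.ext he1 (shiftn_inj he2))
    rw [if_neg e1, if_neg e2]; ring
  case h2 => intro hnot; exact absurd hp hnot
  have e1 : (shiftn n p.1, p.2) ≠ (p.1, shiftn n p.2) := by
    simp only [ne_eq, Prod.mk.injEq, not_and]
    intro _ he2
    exact hgood p hp he2
  rw [if_neg e1, if_pos rfl, mul_zero, zero_add, mul_one] at h0
  rcases mul_eq_zero.mp h0 with h' | h'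
  · exact absurd h' (Finsupp.mem_support_iff.mp hp)
  · exact hc h'

lemma cL_zero (i : TIdx) : cL 0 i = (hdeg i : ℂ)/2 := by
  cases i <;> simp only [cL, hdeg] <;>
    first
      | (split_ifs <;> (push_cast; ring))
      | (push_cast; ring)

lemma star2_L0 (r : T2) (m : ℤ) (h : ∀ p ∈ r.support, hdeg2 p = m) :
    star2 (bs (.L 0)) r = ((m : ℂ)/2) • r := by
  rw [star2_L]
  have : (r.sum fun p c => c • (cL 0 p.1 • Finsupp.single (shiftn 0 p.1, p.2) (1:ℂ)
        + cL 0 p.2 • Finsupp.single (p.1, shiftn 0 p.2) (1:ℂ)))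
      = r.sum fun p c => ((m : ℂ)/2) • Finsupp.single p c := by
    refine Finsupp.sum_congr fun p hp => ?_
    rw [shiftn_zero, shiftn_zero, cL_zero, cL_zero]
    have hd : (hdeg p.1 : ℂ)/2 + (hdeg p.2 : ℂ)/2 = (m : ℂ)/2 := by
      have := h p hp
      rw [hdeg2] at this
      push_cast [← this]
      ring
    rw [show ((p.1, p.2) : TIdx × TIdx) = p from rfl, ← add_smul, hd,
      smul_comm (r p) (((m : ℂ)/2)), Finsupp.smul_single, smul_eq_mul, mul_one]
  rw [this, ← Finsupp.smul_sum, Finsupp.sum_single]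

end Aux

/-- for a homogeneous derivation `d : tsns → tsns ⊗ tsns` of degree `0`,
`x ∗ d(L₀) = 0` for all `x ∈ tsns`, and consequently `d(L₀) ∈ ℂ M₀ ⊗ M₀`. -/
theorem degree_zero_derivation_L0 (d : Tsns →ₗ[ℂ] T2) (hder : IsDer2 d)
    (hdeg : ∀ i : TIdx, ∀ p ∈ (d (bs i)).support, hdeg2 p = hdeg i) :
    (∀ x : Tsns, star2 x (d (bs (TIdx.L 0))) = 0) ∧ d (bs (TIdx.L 0)) ∈ CC := by
  have key : ∀ j : TIdx, star2 (bs j) (d (bs (TIdx.L 0))) = 0 := by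
    intro j
    have h1 := hder (.L 0) j
    rw [brk_bs, brIdx_L, shiftn_zero, cL_zero, map_smul, sg_zero_left, one_smul,
      parity_L, add_zero, sg_zero_right, one_smul,
      star2_L0 (d (bs j)) (_root_.hdeg j) (hdeg j)] at h1
    exact sub_eq_self.mp h1.symm
  have part1 : ∀ x : Tsns, star2 x (d (bs (TIdx.L 0))) = 0 := by
    intro x
    induction x using Finsupp.induction_linear with
    | zero => simp
    | add f g hf hg => rw [map_add, LinearMap.add_apply, hf, hg, add_zero]
    | single a b =>
        have hb : (Finsupp.single a b : Tsns) = b • bs a := by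
          rw [bs, Finsupp.smul_single, smul_eq_mul, mul_one]
        rw [hb, map_smul, LinearMap.smul_apply, key, smul_zero]
  refine ⟨part1, ?_⟩
  have hsupp : (d (bs (TIdx.L 0))).support ⊆ {(TIdx.M 0, TIdx.M 0)} := by
    intro p hp
    rw [Finset.mem_singleton]
    exact Prod.ext (kill1 _ (fun n => part1 (bs (.L n))) p hp)
      (kill2 _ (fun n => part1 (bs (.L n))) p hp)
  rw [Finsupp.support_subset_singleton.mp hsupp]
  rw [CC, show (Finsupp.single (TIdx.M 0, TIdx.M 0) ((d (bs (TIdx.L 0))) (TIdx.M 0, TIdx.M 0)) : T2)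
      = ((d (bs (TIdx.L 0))) (TIdx.M 0, TIdx.M 0)) • Finsupp.single (TIdx.M 0, TIdx.M 0) 1 by
    rw [Finsupp.smul_single, smul_eq_mul, mul_one]]
  exact Submodule.smul_mem _ _ (Submodule.subset_span rfl)
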